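/- With notation as in Section 4, B([X,Y]₂, [X,Y]₂) = −2·Σ_{i∈{2,3,4}, j∈{1,...,4}} (a_i d_j − c_i b_j)² + B([X₁,Y₁], [X₂,Y₂]₁). In particular B([X,Y]₂,[X,Y]₂) ≤ −2z² + 4xy where z² = Σ_{i,j}(a_i d_j − c_i b_j)², x,y as before. -/
import Mathlib


open Complex Matrix

/-- Basis elements of `𝔰𝔲(2,1)` as in Section 4 of the paper. -/
noncomputable def e1 : Matrix (Fin 3) (Fin 3) ℂ := !![I, 0, 0; 0, I, 0; 0, 0, -2*I]
noncomputable def e2 : Matrix (Fin 3) (Fin 3) ℂ := !![I, 0, 0; 0, -I, 0; 0, 0, 0]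
noncomputable def e3 : Matrix (Fin 3) (Fin 3) ℂ := !![0, 1, 0; -1, 0, 0; 0, 0, 0]
noncomputable def e4 : Matrix (Fin 3) (Fin 3) ℂ := !![0, I, 0; I, 0, 0; 0, 0, 0]
noncomputable def f1 : Matrix (Fin 3) (Fin 3) ℂ := !![0, 0, 1; 0, 0, 0; 1, 0, 0]
noncomputable def f2 : Matrix (Fin 3) (Fin 3) ℂ := !![0, 0, 0; 0, 0, 1; 0, 1, 0]
noncomputable def f3 : Matrix (Fin 3) (Fin 3) ℂ := !![0, 0, I; 0, 0, 0; -I, 0, 0]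
noncomputable def f4 : Matrix (Fin 3) (Fin 3) ℂ := !![0, 0, 0; 0, 0, I; 0, -I, 0]

/-- `𝔥₀ = span_ℝ{e₁}`. -/
noncomputable def h0 : Submodule ℝ (Matrix (Fin 3) (Fin 3) ℂ) := Submodule.span ℝ {e1}
/-- `𝔥₁ = span_ℝ{e₂,e₃,e₄}`. -/
noncomputable def h1 : Submodule ℝ (Matrix (Fin 3) (Fin 3) ℂ) :=
  Submodule.span ℝ {e2, e3, e4}
/-- `𝔥₂ = span_ℝ{f₁,f₂,f₃,f₄}`. -/
noncomputable def h2 : Submodule ℝ (Matrix (Fin 3) (Fin 3) ℂ) :=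
  Submodule.span ℝ {f1, f2, f3, f4}

/-- The form `B(X,Y) = -Re tr(XY)`. -/
noncomputable def Bform (X Y : Matrix (Fin 3) (Fin 3) ℂ) : ℝ :=
  -(Matrix.trace (X * Y)).re
set_option maxHeartbeats 2000000

private lemma Bform_add_right (X A B : Matrix (Fin 3) (Fin 3) ℂ) :
    Bform X (A + B) = Bform X A + Bform X B := by
  simp [Bform, mul_add]; ring

private lemma Bform_smul_right (X : Matrix (Fin 3) (Fin 3) ℂ) (t : ℝ)
    (A : Matrix (Fin 3) (Fin 3) ℂ) : Bform X (t • A) = t * Bform X A := by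
  rw [Bform, Matrix.mul_smul, Matrix.trace_smul]
  simp [Bform, Complex.real_smul]

private lemma Bform_e1_zero (a2 a3 a4 c2 c3 c4 : ℝ) :
    Bform ⁅a2 • e2 + a3 • e3 + a4 • e4, c2 • e2 + c3 • e3 + c4 • e4⁆ e1 = 0 := by
  simp [Bform, Ring.lie_def, e1, e2, e3, e4, Matrix.trace, Matrix.mul_apply,
    Fin.sum_univ_three, Matrix.smul_apply, Complex.real_smul, Matrix.diag]
  ring

private lemma Bform_W1W2 (a2 a3 a4 b1 b2 b3 b4 c2 c3 c4 d1 d2 d3 d4 : ℝ) :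
    Bform ⁅a2 • e2 + a3 • e3 + a4 • e4, c2 • e2 + c3 • e3 + c4 • e4⁆
        ⁅b1 • f1 + b2 • f2 + b3 • f3 + b4 • f4, d1 • f1 + d2 • f2 + d3 • f3 + d4 • f4⁆
      = 4 * ((a2*c3 - a3*c2) * (b4*d1 + b3*d2 - b2*d3 - b1*d4)
           + (a2*c4 - a4*c2) * (b4*d3 - b3*d4 + b2*d1 - b1*d2)
           + (a3*c4 - a4*c3) * (-(b4*d2) + b3*d1 + b2*d4 - b1*d3)) := by
  simp [Bform, Ring.lie_def, e2, e3, e4, f1, f2, f3, f4, Matrix.trace, Matrix.mul_apply,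
    Fin.sum_univ_three, Matrix.smul_apply, Complex.real_smul, Matrix.diag]
  ring

private lemma Bform_main (a2 a3 a4 b1 b2 b3 b4 c2 c3 c4 d1 d2 d3 d4 : ℝ) :
    Bform (⁅a2 • e2 + a3 • e3 + a4 • e4, d1 • f1 + d2 • f2 + d3 • f3 + d4 • f4⁆
            + ⁅b1 • f1 + b2 • f2 + b3 • f3 + b4 • f4, c2 • e2 + c3 • e3 + c4 • e4⁆)
          (⁅a2 • e2 + a3 • e3 + a4 • e4, d1 • f1 + d2 • f2 + d3 • f3 + d4 • f4⁆
            + ⁅b1 • f1 + b2 • f2 + b3 • f3 + b4 • f4, c2 • e2 + c3 • e3 + c4 • e4⁆)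
      = -2 * ((a2*d1 - c2*b1)^2 + (a2*d2 - c2*b2)^2 + (a2*d3 - c2*b3)^2
            + (a2*d4 - c2*b4)^2
            + (a3*d1 - c3*b1)^2 + (a3*d2 - c3*b2)^2 + (a3*d3 - c3*b3)^2
            + (a3*d4 - c3*b4)^2
            + (a4*d1 - c4*b1)^2 + (a4*d2 - c4*b2)^2 + (a4*d3 - c4*b3)^2
            + (a4*d4 - c4*b4)^2)
          + 4 * ((a2*c3 - a3*c2) * (b4*d1 + b3*d2 - b2*d3 - b1*d4)
               + (a2*c4 - a4*c2) * (b4*d3 - b3*d4 + b2*d1 - b1*d2)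
               + (a3*c4 - a4*c3) * (-(b4*d2) + b3*d1 + b2*d4 - b1*d3)) := by
  simp [Bform, Ring.lie_def, e2, e3, e4, f1, f2, f3, f4, Matrix.trace, Matrix.mul_apply,
    Fin.sum_univ_three, Matrix.smul_apply, Complex.real_smul, Matrix.diag]
  ring

/-- With `X = X₁ + X₂`, `Y = Y₁ + Y₂` as in Section 4, the `𝔥₂`-component of the
commutator is `[X,Y]₂ = [X₁,Y₂] + [X₂,Y₁]`, and
`B([X,Y]₂,[X,Y]₂) = -2z² + B([X₁,Y₁],[X₂,Y₂]₁)` where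
`z² = Σ_{i∈{2,3,4}, j∈{1,…,4}} (aᵢdⱼ - cᵢbⱼ)²` and `[X₂,Y₂]₁` is the
`𝔥₁`-part `Z₁` of the decomposition `[X₂,Y₂] = Z₀ + Z₁`.  By Cauchy–Schwarz,
`B([X₁,Y₁],[X₂,Y₂]₁) ≤ √(8x²·2y²) = 4xy`, whence
`B([X,Y]₂,[X,Y]₂) ≤ -2z² + 4xy`. -/

theorem su21_h2_component (a2 a3 a4 b1 b2 b3 b4 c2 c3 c4 d1 d2 d3 d4 : ℝ) :
    ∀ Z0 Z1 : Matrix (Fin 3) (Fin 3) ℂ, Z0 ∈ h0 → Z1 ∈ h1 →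
      ⁅b1 • f1 + b2 • f2 + b3 • f3 + b4 • f4,
        d1 • f1 + d2 • f2 + d3 • f3 + d4 • f4⁆ = Z0 + Z1 →
      (Bform (⁅a2 • e2 + a3 • e3 + a4 • e4, d1 • f1 + d2 • f2 + d3 • f3 + d4 • f4⁆
            + ⁅b1 • f1 + b2 • f2 + b3 • f3 + b4 • f4, c2 • e2 + c3 • e3 + c4 • e4⁆)
          (⁅a2 • e2 + a3 • e3 + a4 • e4, d1 • f1 + d2 • f2 + d3 • f3 + d4 • f4⁆
            + ⁅b1 • f1 + b2 • f2 + b3 • f3 + b4 • f4, c2 • e2 + c3 • e3 + c4 • e4⁆)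
        = -2 * ((a2*d1 - c2*b1)^2 + (a2*d2 - c2*b2)^2 + (a2*d3 - c2*b3)^2
            + (a2*d4 - c2*b4)^2
            + (a3*d1 - c3*b1)^2 + (a3*d2 - c3*b2)^2 + (a3*d3 - c3*b3)^2
            + (a3*d4 - c3*b4)^2
            + (a4*d1 - c4*b1)^2 + (a4*d2 - c4*b2)^2 + (a4*d3 - c4*b3)^2
            + (a4*d4 - c4*b4)^2)
          + Bform ⁅a2 • e2 + a3 • e3 + a4 • e4, c2 • e2 + c3 • e3 + c4 • e4⁆ Z1) ∧
      (Bform (⁅a2 • e2 + a3 • e3 + a4 • e4, d1 • f1 + d2 • f2 + d3 • f3 + d4 • f4⁆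
            + ⁅b1 • f1 + b2 • f2 + b3 • f3 + b4 • f4, c2 • e2 + c3 • e3 + c4 • e4⁆)
          (⁅a2 • e2 + a3 • e3 + a4 • e4, d1 • f1 + d2 • f2 + d3 • f3 + d4 • f4⁆
            + ⁅b1 • f1 + b2 • f2 + b3 • f3 + b4 • f4, c2 • e2 + c3 • e3 + c4 • e4⁆)
        ≤ -2 * ((a2*d1 - c2*b1)^2 + (a2*d2 - c2*b2)^2 + (a2*d3 - c2*b3)^2
            + (a2*d4 - c2*b4)^2
            + (a3*d1 - c3*b1)^2 + (a3*d2 - c3*b2)^2 + (a3*d3 - c3*b3)^2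
            + (a3*d4 - c3*b4)^2
            + (a4*d1 - c4*b1)^2 + (a4*d2 - c4*b2)^2 + (a4*d3 - c4*b3)^2
            + (a4*d4 - c4*b4)^2)
          + 4 * Real.sqrt ((a2*c3 - a3*c2)^2 + (a2*c4 - a4*c2)^2 + (a3*c4 - a4*c3)^2)
              * Real.sqrt ((b1*d2 - b2*d1)^2 + (b1*d3 - b3*d1)^2 + (b1*d4 - b4*d1)^2
                + (b2*d3 - b3*d2)^2 + (b2*d4 - b4*d2)^2 + (b3*d4 - b4*d3)^2)) := by
  intro Z0 Z1 hZ0 hZ1 hbr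
  obtain ⟨t, ht⟩ := Submodule.mem_span_singleton.mp hZ0
  have hZ1eq : Bform ⁅a2 • e2 + a3 • e3 + a4 • e4, c2 • e2 + c3 • e3 + c4 • e4⁆ Z1
      = Bform ⁅a2 • e2 + a3 • e3 + a4 • e4, c2 • e2 + c3 • e3 + c4 • e4⁆
          ⁅b1 • f1 + b2 • f2 + b3 • f3 + b4 • f4,
            d1 • f1 + d2 • f2 + d3 • f3 + d4 • f4⁆ := by
    rw [hbr, Bform_add_right, ← ht, Bform_smul_right, Bform_e1_zero]
    ring
  have heq : Bform (⁅a2 • e2 + a3 • e3 + a4 • e4, d1 • f1 + d2 • f2 + d3 • f3 + d4 • f4⁆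
            + ⁅b1 • f1 + b2 • f2 + b3 • f3 + b4 • f4, c2 • e2 + c3 • e3 + c4 • e4⁆)
          (⁅a2 • e2 + a3 • e3 + a4 • e4, d1 • f1 + d2 • f2 + d3 • f3 + d4 • f4⁆
            + ⁅b1 • f1 + b2 • f2 + b3 • f3 + b4 • f4, c2 • e2 + c3 • e3 + c4 • e4⁆)
        = -2 * ((a2*d1 - c2*b1)^2 + (a2*d2 - c2*b2)^2 + (a2*d3 - c2*b3)^2
            + (a2*d4 - c2*b4)^2
            + (a3*d1 - c3*b1)^2 + (a3*d2 - c3*b2)^2 + (a3*d3 - c3*b3)^2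
            + (a3*d4 - c3*b4)^2
            + (a4*d1 - c4*b1)^2 + (a4*d2 - c4*b2)^2 + (a4*d3 - c4*b3)^2
            + (a4*d4 - c4*b4)^2)
          + Bform ⁅a2 • e2 + a3 • e3 + a4 • e4, c2 • e2 + c3 • e3 + c4 • e4⁆ Z1 := by
    rw [hZ1eq, Bform_W1W2, Bform_main]
  refine ⟨heq, ?_⟩
  rw [heq, hZ1eq, Bform_W1W2]
  have hX : (0:ℝ) ≤ (a2*c3 - a3*c2)^2 + (a2*c4 - a4*c2)^2 + (a3*c4 - a4*c3)^2 := by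
    positivity
  have hY : (0:ℝ) ≤ (b1*d2 - b2*d1)^2 + (b1*d3 - b3*d1)^2 + (b1*d4 - b4*d1)^2
      + (b2*d3 - b3*d2)^2 + (b2*d4 - b4*d2)^2 + (b3*d4 - b4*d3)^2 := by
    positivity
  have hCS : ((a2*c3 - a3*c2) * (b4*d1 + b3*d2 - b2*d3 - b1*d4)
           + (a2*c4 - a4*c2) * (b4*d3 - b3*d4 + b2*d1 - b1*d2)
           + (a3*c4 - a4*c3) * (-(b4*d2) + b3*d1 + b2*d4 - b1*d3))^2
      ≤ ((a2*c3 - a3*c2)^2 + (a2*c4 - a4*c2)^2 + (a3*c4 - a4*c3)^2)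
        * ((b1*d2 - b2*d1)^2 + (b1*d3 - b3*d1)^2 + (b1*d4 - b4*d1)^2
          + (b2*d3 - b3*d2)^2 + (b2*d4 - b4*d2)^2 + (b3*d4 - b4*d3)^2) := by
    have hid : ((a2*c3 - a3*c2)^2 + (a2*c4 - a4*c2)^2 + (a3*c4 - a4*c3)^2)
        * ((b1*d2 - b2*d1)^2 + (b1*d3 - b3*d1)^2 + (b1*d4 - b4*d1)^2
          + (b2*d3 - b3*d2)^2 + (b2*d4 - b4*d2)^2 + (b3*d4 - b4*d3)^2)
        - ((a2*c3 - a3*c2) * (b4*d1 + b3*d2 - b2*d3 - b1*d4)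
           + (a2*c4 - a4*c2) * (b4*d3 - b3*d4 + b2*d1 - b1*d2)
           + (a3*c4 - a4*c3) * (-(b4*d2) + b3*d1 + b2*d4 - b1*d3))^2
      = ((a2*c3 - a3*c2) * (b4*d3 - b3*d4 + b2*d1 - b1*d2)
        - (a2*c4 - a4*c2) * (b4*d1 + b3*d2 - b2*d3 - b1*d4))^2
      + ((a2*c3 - a3*c2) * (-(b4*d2) + b3*d1 + b2*d4 - b1*d3)
        - (a3*c4 - a4*c3) * (b4*d1 + b3*d2 - b2*d3 - b1*d4))^2
      + ((a2*c4 - a4*c2) * (-(b4*d2) + b3*d1 + b2*d4 - b1*d3)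
        - (a3*c4 - a4*c3) * (b4*d3 - b3*d4 + b2*d1 - b1*d2))^2 := by ring
    linarith [sq_nonneg ((a2*c3 - a3*c2) * (b4*d3 - b3*d4 + b2*d1 - b1*d2)
        - (a2*c4 - a4*c2) * (b4*d1 + b3*d2 - b2*d3 - b1*d4)),
      sq_nonneg ((a2*c3 - a3*c2) * (-(b4*d2) + b3*d1 + b2*d4 - b1*d3)
        - (a3*c4 - a4*c3) * (b4*d1 + b3*d2 - b2*d3 - b1*d4)),
      sq_nonneg ((a2*c4 - a4*c2) * (-(b4*d2) + b3*d1 + b2*d4 - b1*d3)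
        - (a3*c4 - a4*c3) * (b4*d3 - b3*d4 + b2*d1 - b1*d2))]
  have hfinal : (a2*c3 - a3*c2) * (b4*d1 + b3*d2 - b2*d3 - b1*d4)
           + (a2*c4 - a4*c2) * (b4*d3 - b3*d4 + b2*d1 - b1*d2)
           + (a3*c4 - a4*c3) * (-(b4*d2) + b3*d1 + b2*d4 - b1*d3)
      ≤ Real.sqrt ((a2*c3 - a3*c2)^2 + (a2*c4 - a4*c2)^2 + (a3*c4 - a4*c3)^2)
        * Real.sqrt ((b1*d2 - b2*d1)^2 + (b1*d3 - b3*d1)^2 + (b1*d4 - b4*d1)^2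
          + (b2*d3 - b3*d2)^2 + (b2*d4 - b4*d2)^2 + (b3*d4 - b4*d3)^2) := by
    calc _ ≤ |(a2*c3 - a3*c2) * (b4*d1 + b3*d2 - b2*d3 - b1*d4)
           + (a2*c4 - a4*c2) * (b4*d3 - b3*d4 + b2*d1 - b1*d2)
           + (a3*c4 - a4*c3) * (-(b4*d2) + b3*d1 + b2*d4 - b1*d3)| := le_abs_self _
    _ = Real.sqrt (((a2*c3 - a3*c2) * (b4*d1 + b3*d2 - b2*d3 - b1*d4)
           + (a2*c4 - a4*c2) * (b4*d3 - b3*d4 + b2*d1 - b1*d2)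
           + (a3*c4 - a4*c3) * (-(b4*d2) + b3*d1 + b2*d4 - b1*d3))^2) :=
      (Real.sqrt_sq_eq_abs _).symm
    _ ≤ Real.sqrt (((a2*c3 - a3*c2)^2 + (a2*c4 - a4*c2)^2 + (a3*c4 - a4*c3)^2)
        * ((b1*d2 - b2*d1)^2 + (b1*d3 - b3*d1)^2 + (b1*d4 - b4*d1)^2
          + (b2*d3 - b3*d2)^2 + (b2*d4 - b4*d2)^2 + (b3*d4 - b4*d3)^2)) :=
      Real.sqrt_le_sqrt hCS
    _ = _ := Real.sqrt_mul hX _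
  linarith
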